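/- For every real x, e^{x²} · ∫_x^∞ e^{-t²} dt > 1/(x + √(x²+2)). -/

import Mathlib

open Real MeasureTheory Set

noncomputable def Gfun (t : ℝ) : ℝ := Real.exp (-t ^ 2) / (t + Real.sqrt (t ^ 2 + 2))

lemma sq_sqrt' (t : ℝ) : (Real.sqrt (t ^ 2 + 2)) ^ 2 = t ^ 2 + 2 :=
  Real.sq_sqrt (by positivity)

lemma sqrt_pos' (t : ℝ) : 0 < Real.sqrt (t ^ 2 + 2) :=
  Real.sqrt_pos.2 (by positivity)

lemma denom_pos (t : ℝ) : 0 < t + Real.sqrt (t ^ 2 + 2) := by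
  nlinarith [sq_sqrt' t, sqrt_pos' t]

lemma alg (e s t : ℝ) (hspos : 0 < s) (hd : 0 < t + s) :
    -e * (2 * t * s + 1) / (s * (t + s)) =
      (e * -(2 * t) * (t + s) - e * (1 + 1 / (2 * s) * (2 * t))) / (t + s) ^ 2 := by
  field_simp
  ring

lemma hasDerivAt_G (t : ℝ) :
    HasDerivAt Gfun
      (-Real.exp (-t ^ 2) * (2 * t * Real.sqrt (t ^ 2 + 2) + 1) /
        (Real.sqrt (t ^ 2 + 2) * (t + Real.sqrt (t ^ 2 + 2)))) t := by
  have hspos : 0 < Real.sqrt (t ^ 2 + 2) := sqrt_pos' t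
  have hd : 0 < t + Real.sqrt (t ^ 2 + 2) := denom_pos t
  have h1 : HasDerivAt (fun u : ℝ => u ^ 2 + 2) (2 * t) t := by
    simpa using ((hasDerivAt_pow 2 t).add_const 2)
  have h2 : HasDerivAt (fun u : ℝ => Real.sqrt (u ^ 2 + 2))
      (1 / (2 * Real.sqrt (t ^ 2 + 2)) * (2 * t)) t :=
    (Real.hasDerivAt_sqrt (by positivity)).comp t h1
  have h3 : HasDerivAt (fun u : ℝ => u + Real.sqrt (u ^ 2 + 2))
      (1 + 1 / (2 * Real.sqrt (t ^ 2 + 2)) * (2 * t)) t :=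
    (hasDerivAt_id t).add h2
  have h4 : HasDerivAt (fun u : ℝ => Real.exp (-u ^ 2)) (Real.exp (-t ^ 2) * (-(2 * t))) t := by
    have : HasDerivAt (fun u : ℝ => -u ^ 2) (-(2 * t)) t := by
      simpa using (hasDerivAt_pow 2 t).fun_neg
    exact (Real.hasDerivAt_exp _).comp t this
  have h5 := h4.div h3 (ne_of_gt hd)
  rw [show Gfun = fun u : ℝ => Real.exp (-u ^ 2) / (u + Real.sqrt (u ^ 2 + 2)) from rfl]
  rw [alg (Real.exp (-t ^ 2)) (Real.sqrt (t ^ 2 + 2)) t hspos hd]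
  exact h5

noncomputable def G' (t : ℝ) : ℝ :=
  -Real.exp (-t ^ 2) * (2 * t * Real.sqrt (t ^ 2 + 2) + 1) /
    (Real.sqrt (t ^ 2 + 2) * (t + Real.sqrt (t ^ 2 + 2)))

lemma ts_lt (t : ℝ) : t * Real.sqrt (t ^ 2 + 2) < t ^ 2 + 1 := by
  nlinarith [sq_sqrt' t, sqrt_pos' t, sq_nonneg (t - Real.sqrt (t ^ 2 + 2)),
    sq_nonneg (t + Real.sqrt (t ^ 2 + 2))]

lemma sd_ge_one (t : ℝ) : 1 ≤ Real.sqrt (t ^ 2 + 2) * (t + Real.sqrt (t ^ 2 + 2)) := by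
  nlinarith [sq_sqrt' t, sqrt_pos' t, sq_nonneg (t + Real.sqrt (t ^ 2 + 2)),
    sq_nonneg (t * Real.sqrt (t ^ 2 + 2) + 1)]

lemma G'_bound (t : ℝ) : ‖G' t‖ ≤ ‖8 * Real.exp (-(1 / 2 : ℝ) * t ^ 2)‖ := by
  have hs2 := sq_sqrt' t
  have hspos := sqrt_pos' t
  have hd := denom_pos t
  have h1 := sd_ge_one t
  have habs : |t * Real.sqrt (t ^ 2 + 2)| ≤ t ^ 2 + 1 := by
    rw [abs_le]
    constructor <;> nlinarith [sq_sqrt' t, sqrt_pos' t, sq_nonneg (t - Real.sqrt (t ^ 2 + 2)),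
      sq_nonneg (t + Real.sqrt (t ^ 2 + 2))]
  have hexp : 2 * t ^ 2 + 3 ≤ 8 * Real.exp ((1 / 2 : ℝ) * t ^ 2) := by
    nlinarith [Real.add_one_le_exp ((1 / 2 : ℝ) * t ^ 2)]
  have he : Real.exp (-t ^ 2) = Real.exp (-(1 / 2 : ℝ) * t ^ 2) * Real.exp (-(1 / 2 : ℝ) * t ^ 2) := by
    rw [← Real.exp_add]; ring_nf
  have hpos8 : (0 : ℝ) < 8 * Real.exp (-(1 / 2 : ℝ) * t ^ 2) := by positivity
  rw [Real.norm_eq_abs, Real.norm_eq_abs, abs_of_pos hpos8]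
  rw [G', abs_div, abs_of_pos (by positivity : (0:ℝ) < Real.sqrt (t ^ 2 + 2) * (t + Real.sqrt (t ^ 2 + 2)))]
  rw [div_le_iff₀ (by positivity)]
  have hnum : |(-Real.exp (-t ^ 2)) * (2 * t * Real.sqrt (t ^ 2 + 2) + 1)| ≤
      Real.exp (-t ^ 2) * (2 * t ^ 2 + 3) := by
    rw [abs_mul, abs_neg, abs_of_pos (Real.exp_pos _)]
    have : |2 * t * Real.sqrt (t ^ 2 + 2) + 1| ≤ 2 * t ^ 2 + 3 := by
      rw [abs_le]; constructor <;> [nlinarith [abs_le.1 habs]; nlinarith [abs_le.1 habs]]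
    exact mul_le_mul_of_nonneg_left this (Real.exp_pos _).le
  calc |(-Real.exp (-t ^ 2)) * (2 * t * Real.sqrt (t ^ 2 + 2) + 1)|
      ≤ Real.exp (-t ^ 2) * (2 * t ^ 2 + 3) := hnum
    _ ≤ 8 * Real.exp (-(1 / 2 : ℝ) * t ^ 2) * 1 := by
        rw [he]
        have hEE : Real.exp (-(1/2:ℝ)*t^2) * Real.exp ((1/2:ℝ)*t^2) = 1 := by
          rw [← Real.exp_add]; norm_num
        have h2 : Real.exp (-(1 / 2 : ℝ) * t ^ 2) * (2 * t ^ 2 + 3) ≤ 8 := by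
          nlinarith [mul_le_mul_of_nonneg_left hexp (Real.exp_pos (-(1 / 2 : ℝ) * t ^ 2)).le, hEE]
        nlinarith [Real.exp_pos (-(1 / 2 : ℝ) * t ^ 2)]
    _ ≤ 8 * Real.exp (-(1 / 2 : ℝ) * t ^ 2) *
          (Real.sqrt (t ^ 2 + 2) * (t + Real.sqrt (t ^ 2 + 2))) := by
        exact mul_le_mul_of_nonneg_left (sd_ge_one t) hpos8.le

lemma G'_continuous : Continuous G' := by
  apply Continuous.div
  · fun_prop
  · fun_prop
  · intro t
    exact ne_of_gt (mul_pos (sqrt_pos' t) (denom_pos t))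

lemma G'_integrable (x : ℝ) : IntegrableOn G' (Set.Ioi x) := by
  have hdom : Integrable (fun t : ℝ => 8 * Real.exp (-(1 / 2 : ℝ) * t ^ 2)) := by
    exact (integrable_exp_neg_mul_sq (by norm_num : (0:ℝ) < 1/2)).const_mul 8
  exact (hdom.mono G'_continuous.aestronglyMeasurable
    (Filter.Eventually.of_forall G'_bound)).integrableOn

lemma exp_integrable (x : ℝ) : IntegrableOn (fun t : ℝ => Real.exp (-t ^ 2)) (Set.Ioi x) := by
  have := integrable_exp_neg_mul_sq (by norm_num : (0:ℝ) < 1)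
  simp only [neg_mul, one_mul] at this
  exact this.integrableOn

lemma G_tendsto : Filter.Tendsto Gfun Filter.atTop (nhds 0) := by
  have h1 : Filter.Tendsto (fun t : ℝ => Real.exp (-t ^ 2)) Filter.atTop (nhds 0) := by
    apply Real.tendsto_exp_atBot.comp
    have h2 : Filter.Tendsto (fun t : ℝ => t ^ 2) Filter.atTop Filter.atTop :=
      Filter.tendsto_pow_atTop two_ne_zero
    exact Filter.tendsto_neg_atBot_iff.2 h2
  apply squeeze_zero' ?_ ?_ h1
  · exact Filter.Eventually.of_forall fun t =>
      div_nonneg (Real.exp_pos _).le (denom_pos t).le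
  · filter_upwards [Filter.eventually_ge_atTop (0:ℝ)] with t ht
    have h3 : 1 ≤ t + Real.sqrt (t ^ 2 + 2) := by
      nlinarith [sq_sqrt' t, sqrt_pos' t]
    exact div_le_self (Real.exp_pos _).le h3

lemma key (x : ℝ) : ∫ t in Set.Ioi x, G' t = 0 - Gfun x := by
  exact MeasureTheory.integral_Ioi_of_hasDerivAt_of_tendsto'
    (fun t _ => hasDerivAt_G t) (G'_integrable x) G_tendsto

lemma pointwise (t : ℝ) : 0 < Real.exp (-t ^ 2) + G' t := by
  have hs2 := sq_sqrt' t
  have hspos := sqrt_pos' t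
  have hd := denom_pos t
  have hts := ts_lt t
  have hq : (2 * t * Real.sqrt (t ^ 2 + 2) + 1) /
      (Real.sqrt (t ^ 2 + 2) * (t + Real.sqrt (t ^ 2 + 2))) < 1 := by
    rw [div_lt_one (mul_pos hspos hd)]
    nlinarith
  have hG : G' t = -(Real.exp (-t ^ 2) * ((2 * t * Real.sqrt (t ^ 2 + 2) + 1) /
      (Real.sqrt (t ^ 2 + 2) * (t + Real.sqrt (t ^ 2 + 2))))) := by
    rw [G']; ring
  rw [hG]
  nlinarith [Real.exp_pos (-t ^ 2)]

theorem stmt2 (x : ℝ) :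
    Real.exp (x ^ 2) * ∫ t in Set.Ioi x, Real.exp (-t ^ 2) >
      1 / (x + Real.sqrt (x ^ 2 + 2)) := by
  have hsum : 0 < ∫ t in Set.Ioi x, (Real.exp (-t ^ 2) + G' t) := by
    rw [MeasureTheory.setIntegral_pos_iff_support_of_nonneg_ae
      (Filter.Eventually.of_forall fun t => (pointwise t).le)
      ((exp_integrable x).add (G'_integrable x))]
    have hsupp : (Function.support fun t => Real.exp (-t ^ 2) + G' t) = Set.univ :=
      Set.eq_univ_of_forall fun t => ne_of_gt (pointwise t)
    rw [hsupp, Set.univ_inter, Real.volume_Ioi]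
    simp
  rw [MeasureTheory.integral_add (exp_integrable x) (G'_integrable x), key x] at hsum
  have hmain : Gfun x < ∫ t in Set.Ioi x, Real.exp (-t ^ 2) := by linarith
  have hd := denom_pos x
  have h2 := mul_lt_mul_of_pos_left hmain (Real.exp_pos (x ^ 2))
  calc 1 / (x + Real.sqrt (x ^ 2 + 2))
      = Real.exp (x ^ 2) * Gfun x := by
        rw [Gfun, ← mul_div_assoc, ← Real.exp_add]
        norm_num
    _ < _ := h2
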